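/- Let k ≤ n ≤ r be positive integers, let λ > 0, m > 0, let C > 0 be a real number with r/C ≤ 1, and let μ ≥ 0. Let T_A = ∑_{i=1}^{n} T_i^{A} where T_i^{A} = t^{(i)} + ∑_{j=1}^{S_i} η_j^{(i)} with t^{(i)} ~ SExp(m/k, λ), S_i geometric with parameter (r−i+1)/C, and η's i.i.d. nonnegative integrable with mean μ independent of S_i; and let T_B = ∑_{i=1}^{k} T_i^{B} where T_i^{B} has the same form with S_i geometric with parameter (n−i+1)/C. Assuming all summands are integrable, E[T_A + T_B] = (n+k)/λ + (n/k + 1)·m + C·μ·(H_r + H_n − H_{r−n} − H_{n−k}). -/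

import Mathlib

open MeasureTheory ProbabilityTheory

/-- The shifted exponential distribution `SExp(Δ, λ)`:
    density `λ e^{-λ(x-Δ)}` for `x ≥ Δ` and `0` otherwise. -/
noncomputable def sexp (Δ lam : ℝ) : Measure ℝ :=
  volume.withDensity fun x =>
    ENNReal.ofReal (if Δ ≤ x then lam * Real.exp (-lam * (x - Δ)) else 0)


open Filter in
private lemma sexp_mean_aux (Δ lam : ℝ) (hΔ : 0 ≤ Δ) (hlam : 0 < lam) :
    ∫ x, x ∂(sexp Δ lam) = Δ + 1 / lam := by
  have hd : ∀ x : ℝ, 0 ≤ (if Δ ≤ x then lam * Real.exp (-lam * (x - Δ)) else 0) := by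
    intro x; split <;> positivity
  have hdm : Measurable (fun x : ℝ => if Δ ≤ x then lam * Real.exp (-lam * (x - Δ)) else 0) := by
    apply Measurable.ite (measurableSet_le measurable_const measurable_id) <;> fun_prop
  have h1 : ∫ x, x ∂(sexp Δ lam)
      = ∫ x, (if Δ ≤ x then lam * Real.exp (-lam * (x - Δ)) else 0) * x := by
    rw [sexp]
    rw [show (fun x : ℝ => ENNReal.ofReal (if Δ ≤ x then lam * Real.exp (-lam * (x - Δ)) else 0))
        = fun x : ℝ => ((Real.toNNReal (if Δ ≤ x then lam * Real.exp (-lam * (x - Δ)) else 0) : NNReal) : ENNReal)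
        from rfl]
    rw [integral_withDensity_eq_integral_smul (by fun_prop) (fun x : ℝ => x)]
    congr 1; ext x
    rw [NNReal.smul_def, smul_eq_mul, Real.coe_toNNReal _ (hd x)]
  rw [h1]
  have h2 : (fun x : ℝ => (if Δ ≤ x then lam * Real.exp (-lam * (x - Δ)) else 0) * x)
      = Set.indicator (Set.Ici Δ) (fun x => lam * Real.exp (-lam * (x - Δ)) * x) := by
    ext x; by_cases h : Δ ≤ x <;> simp [Set.indicator, Set.mem_Ici, h]
  rw [h2, integral_indicator measurableSet_Ici, integral_Ici_eq_integral_Ioi]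
  have hten : Tendsto (fun x : ℝ => -((x + 1 / lam) * Real.exp (-lam * (x - Δ)))) atTop (nhds 0) := by
    have h3 : Tendsto (fun x : ℝ => x * Real.exp (-x)) atTop (nhds 0) := by
      simpa using Real.tendsto_pow_mul_exp_neg_atTop_nhds_zero 1
    have hcomp : Tendsto (fun x : ℝ => lam * (x - Δ)) atTop atTop := by
      apply Tendsto.const_mul_atTop hlam; exact tendsto_atTop_add_const_right _ _ tendsto_id
    have h4 : Tendsto (fun x : ℝ => (lam * (x - Δ)) * Real.exp (-(lam * (x - Δ)))) atTop (nhds 0) :=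
      h3.comp hcomp
    have h5 : Tendsto (fun x : ℝ => Real.exp (-(lam * (x - Δ)))) atTop (nhds 0) :=
      Real.tendsto_exp_neg_atTop_nhds_zero.comp hcomp
    have h6 : Tendsto (fun x : ℝ =>
        -((lam * (x - Δ)) * Real.exp (-(lam * (x - Δ))) / lam
          + (Δ + 1 / lam) * Real.exp (-(lam * (x - Δ))))) atTop (nhds 0) := by
      have := ((h4.div_const lam).add (h5.const_mul (Δ + 1 / lam))).neg
      simpa using this
    refine h6.congr fun x => ?_
    have hl : lam ≠ 0 := ne_of_gt hlam
    field_simp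
    ring
  have key : ∫ x in Set.Ioi Δ, lam * Real.exp (-lam * (x - Δ)) * x
      = 0 - -((Δ + 1 / lam) * Real.exp (-lam * (Δ - Δ))) := by
    apply integral_Ioi_of_hasDerivAt_of_nonneg
      (g := fun x => -((x + 1 / lam) * Real.exp (-lam * (x - Δ))))
    · exact (Continuous.continuousWithinAt (by fun_prop))
    · intro x _
      have h1 : HasDerivAt (fun x : ℝ => x + 1 / lam) 1 x := (hasDerivAt_id x).add_const _
      have h2 : HasDerivAt (fun x : ℝ => -lam * (x - Δ)) (-lam) x := by
        simpa using ((hasDerivAt_id x).sub_const Δ).const_mul (-lam)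
      have h3 := (Real.hasDerivAt_exp (-lam * (x - Δ))).comp x h2
      have h4 := (h1.mul h3).neg
      refine h4.congr_deriv ?_
      have hl : lam ≠ 0 := ne_of_gt hlam
      simp only [Function.comp_apply]
      have hinv : 1 / lam * lam = 1 := by field_simp
      linear_combination (Real.exp (-lam * (x - Δ))) * hinv
    · intro x hx
      have hx0 : 0 ≤ x := le_trans hΔ (le_of_lt hx)
      positivity
    · exact hten
  rw [key]
  simp

private lemma geom_mean_real_aux (p μ : ℝ) (hp0 : 0 < p) (hp1 : p ≤ 1) :
    ∑' t : ℕ, ((t : ℝ) + 1) * (1 - p) ^ t * (p * μ) = μ / p := by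
  set x := 1 - p with hx
  have hx0 : 0 ≤ x := by simp [hx]; linarith
  have hx1 : ‖x‖ < 1 := by rw [Real.norm_eq_abs, abs_of_nonneg hx0]; linarith
  have hs1 : Summable (fun t : ℕ => (t : ℝ) * x ^ t) := by
    simpa using summable_pow_mul_geometric_of_norm_lt_one 1 hx1
  have hs2 : Summable (fun t : ℕ => x ^ t) := summable_geometric_of_norm_lt_one hx1
  have key : ∑' t : ℕ, ((t : ℝ) + 1) * x ^ t = 1 / p ^ 2 := by
    have : ∀ t : ℕ, ((t : ℝ) + 1) * x ^ t = (t : ℝ) * x ^ t + x ^ t := by intro t; ring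
    rw [tsum_congr this, Summable.tsum_add hs1 hs2, tsum_coe_mul_geometric_of_norm_lt_one hx1,
      tsum_geometric_of_norm_lt_one hx1]
    have h1x : 1 - x = p := by rw [hx]; ring
    rw [h1x]
    field_simp
    ring
  rw [tsum_mul_right, key]
  field_simp

open Filter in
private lemma wald_aux {Ω : Type*} [MeasurableSpace Ω] (P : Measure Ω) [IsProbabilityMeasure P]
    (S : Ω → ℕ) (η : ℕ → Ω → ℝ) (μ p : ℝ) (hμ : 0 ≤ μ) (hp0 : 0 < p) (hp1 : p ≤ 1)
    (hS : Measurable S)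
    (hηmeas : ∀ j, Measurable (η j)) (hηnn : ∀ j ω, 0 ≤ η j ω)
    (hηint : ∀ j, Integrable (η j) P) (hηmean : ∀ j, ∫ ω, η j ω ∂P = μ)
    (hindep : IndepFun S (fun ω (j : ℕ) => η j ω) P)
    (hint : Integrable (fun ω => ∑ j ∈ Finset.range (S ω), η j ω) P)
    (hSd : ∀ s : ℕ, 1 ≤ s → P {ω | S ω = s} = ENNReal.ofReal ((1 - p) ^ (s - 1) * p)) :
    ∫ ω, ∑ j ∈ Finset.range (S ω), η j ω ∂P = μ / p := by
  set F : Ω → ℝ := fun ω => ∑ j ∈ Finset.range (S ω), η j ω with hF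
  have hFnn : ∀ ω, 0 ≤ F ω := fun ω => Finset.sum_nonneg fun j _ => hηnn j ω
  have h0 : ENNReal.ofReal (∫ ω, F ω ∂P) = ∫⁻ ω, ENNReal.ofReal (F ω) ∂P :=
    ofReal_integral_eq_lintegral_ofReal hint (Filter.Eventually.of_forall hFnn)
  have hpt : ∀ ω, ENNReal.ofReal (F ω)
      = ∑' s : ℕ, Set.indicator {ω' | S ω' = s}
          (fun ω' => ENNReal.ofReal (∑ j ∈ Finset.range s, η j ω')) ω := by
    intro ω
    rw [tsum_eq_single (S ω) (fun s hs => Set.indicator_of_notMem (by simpa using hs.symm) _)]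
    exact (Set.indicator_of_mem (show ω ∈ {ω' | S ω' = S ω} from rfl)
      (fun ω' => ENNReal.ofReal (∑ j ∈ Finset.range (S ω), η j ω'))).symm
  have hvec : Measurable (fun ω (j : ℕ) => η j ω) :=
    measurable_pi_lambda _ fun j => hηmeas j
  have hterm : ∀ s : ℕ,
      ∫⁻ ω, Set.indicator {ω' | S ω' = s}
          (fun ω' => ENNReal.ofReal (∑ j ∈ Finset.range s, η j ω')) ω ∂P
        = P {ω | S ω = s} * ENNReal.ofReal (s * μ) := by
    intro s
    set f : ℕ → ENNReal := Set.indicator {s} (fun _ => 1) with hf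
    set g : (ℕ → ℝ) → ENNReal := fun v => ENNReal.ofReal (∑ j ∈ Finset.range s, v j) with hg
    have hfm : Measurable f := Measurable.indicator measurable_const (measurableSet_singleton s)
    have hgm : Measurable g := by
      apply Measurable.ennreal_ofReal
      exact Finset.measurable_sum _ fun j _ => measurable_pi_apply j
    have hptw : ∀ ω, Set.indicator {ω' | S ω' = s}
          (fun ω' => ENNReal.ofReal (∑ j ∈ Finset.range s, η j ω')) ω
        = (f ∘ S) ω * (g ∘ (fun ω (j : ℕ) => η j ω)) ω := by
      intro ω
      by_cases h : S ω = s <;>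
        simp [Set.indicator, hf, hg, h, Function.comp]
    calc ∫⁻ ω, Set.indicator {ω' | S ω' = s}
          (fun ω' => ENNReal.ofReal (∑ j ∈ Finset.range s, η j ω')) ω ∂P
        = ∫⁻ ω, (f ∘ S) ω * (g ∘ (fun ω (j : ℕ) => η j ω)) ω ∂P := by
          exact lintegral_congr hptw
      _ = (∫⁻ ω, (f ∘ S) ω ∂P) * ∫⁻ ω, (g ∘ (fun ω (j : ℕ) => η j ω)) ω ∂P := by
          exact lintegral_mul_eq_lintegral_mul_lintegral_of_indepFun (hfm.comp hS)
            (hgm.comp hvec) (hindep.comp hfm hgm)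
      _ = P {ω | S ω = s} * ENNReal.ofReal (s * μ) := by
          congr 1
          · have heq : ∫⁻ ω, (f ∘ S) ω ∂P
                = ∫⁻ ω, Set.indicator {ω | S ω = s} (1 : Ω → ENNReal) ω ∂P :=
              lintegral_congr fun ω => by
                by_cases h : S ω = s <;> simp [hf, h, Set.indicator]
            rw [heq, lintegral_indicator_one
              (show MeasurableSet {ω | S ω = s} from hS (measurableSet_singleton s))]
          · have hI : Integrable (fun ω => ∑ j ∈ Finset.range s, η j ω) P :=
              integrable_finset_sum _ fun j _ => hηint j
            have := (ofReal_integral_eq_lintegral_ofReal hI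
              (Filter.Eventually.of_forall fun ω => Finset.sum_nonneg fun j _ => hηnn j ω)).symm
            rw [hg]
            simp only [Function.comp]
            rw [this, integral_finset_sum _ fun j _ => hηint j]
            simp [hηmean, mul_comm]
  have hmain : ∫⁻ ω, ENNReal.ofReal (F ω) ∂P
      = ∑' s : ℕ, P {ω | S ω = s} * ENNReal.ofReal (s * μ) := by
    calc ∫⁻ ω, ENNReal.ofReal (F ω) ∂P
        = ∫⁻ ω, ∑' s : ℕ, Set.indicator {ω' | S ω' = s}
            (fun ω' => ENNReal.ofReal (∑ j ∈ Finset.range s, η j ω')) ω ∂P :=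
          lintegral_congr hpt
      _ = ∑' s : ℕ, ∫⁻ ω, Set.indicator {ω' | S ω' = s}
            (fun ω' => ENNReal.ofReal (∑ j ∈ Finset.range s, η j ω')) ω ∂P := by
          apply lintegral_tsum
          intro s
          exact (Measurable.indicator
            ((Finset.measurable_sum _ fun j _ => hηmeas j).ennreal_ofReal)
            (show MeasurableSet {ω | S ω = s} from hS (measurableSet_singleton s))).aemeasurable
      _ = _ := tsum_congr hterm
  have hgeom : ∑' s : ℕ, P {ω | S ω = s} * ENNReal.ofReal (s * μ)
      = ENNReal.ofReal (μ / p) := by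
    rw [tsum_eq_zero_add' ENNReal.summable]
    simp only [Nat.cast_zero, zero_mul, ENNReal.ofReal_zero, mul_zero, zero_add]
    have hth : ∀ t : ℕ, P {ω | S ω = t + 1} * ENNReal.ofReal (((t : ℝ) + 1) * μ)
        = ENNReal.ofReal (((t : ℝ) + 1) * (1 - p) ^ t * (p * μ)) := by
      intro t
      rw [hSd (t + 1) (Nat.le_add_left 1 t), ← ENNReal.ofReal_mul
        (mul_nonneg (pow_nonneg (by linarith) _) hp0.le)]
      congr 1
      simp only [Nat.add_sub_cancel]
      ring
    calc ∑' t : ℕ, P {ω | S ω = t + 1} * ENNReal.ofReal (((t + 1 : ℕ) : ℝ) * μ)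
        = ∑' t : ℕ, ENNReal.ofReal (((t : ℝ) + 1) * (1 - p) ^ t * (p * μ)) := by
          apply tsum_congr; intro t
          push_cast
          exact hth t
      _ = ENNReal.ofReal (∑' t : ℕ, ((t : ℝ) + 1) * (1 - p) ^ t * (p * μ)) := by
          rw [ENNReal.ofReal_tsum_of_nonneg]
          · intro t
            have hx0 : (0:ℝ) ≤ 1 - p := by linarith
            positivity
          · have hx1 : ‖1 - p‖ < 1 := by
              rw [Real.norm_eq_abs, abs_of_nonneg (by linarith)]; linarith
            have hs1 : Summable (fun t : ℕ => ((t : ℝ) + 1) * (1 - p) ^ t) := by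
              have h1 : Summable (fun t : ℕ => (t : ℝ) * (1 - p) ^ t) := by
                simpa using summable_pow_mul_geometric_of_norm_lt_one 1 hx1
              have h2 : Summable (fun t : ℕ => (1 - p) ^ t) :=
                summable_geometric_of_norm_lt_one hx1
              exact (h1.add h2).congr (by intro t; ring)
            exact hs1.mul_right _
      _ = ENNReal.ofReal (μ / p) := by rw [geom_mean_real_aux p μ hp0 hp1]
  have hfin := h0.trans (hmain.trans hgeom)
  have h2 := congrArg ENNReal.toReal hfin
  rwa [ENNReal.toReal_ofReal (integral_nonneg hFnn),
    ENNReal.toReal_ofReal (div_nonneg hμ hp0.le)] at h2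

/-- Harmonic number `H_j = ∑_{i=1}^j 1/i`, as a real number. -/
noncomputable def H (j : ℕ) : ℝ := (harmonic j : ℝ)


private lemma H_succ_aux (c : ℕ) : H (c + 1) = H c + 1 / ((c : ℝ) + 1) := by
  unfold H; rw [harmonic_succ]; push_cast; ring

private lemma sum_inv_Icc_aux (a : ℕ) : ∀ b : ℕ, b ≤ a →
    ∑ i ∈ Finset.Icc 1 b, (1 : ℝ) / ((a : ℝ) - (i : ℝ) + 1) = H a - H (a - b) := by
  intro b
  induction b with
  | zero => intro _; simp
  | succ b ih =>
    intro hb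
    rw [Finset.sum_Icc_succ_top (Nat.one_le_iff_ne_zero.mpr (Nat.succ_ne_zero b)),
      ih (le_trans (Nat.le_succ b) hb)]
    have h2 : a - b = (a - (b + 1)) + 1 := by omega
    have h3 : ((a - (b + 1) : ℕ) : ℝ) = (a : ℝ) - (b : ℝ) - 1 := by
      have := Nat.cast_sub hb (R := ℝ); push_cast at this ⊢; linarith
    rw [h2, H_succ_aux, h3]
    push_cast
    ring

theorem stmt5 {Ω : Type*} [MeasurableSpace Ω] (P : Measure Ω) [IsProbabilityMeasure P]
    (k n r : ℕ) (hk : 0 < k) (hkn : k ≤ n) (hnr : n ≤ r)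
    (lam m : ℝ) (hlam : 0 < lam) (hm : 0 < m)
    (C : ℝ) (hC : 0 < C) (hrC : (r : ℝ) / C ≤ 1)
    (μ : ℝ) (hμ : 0 ≤ μ)
    -- dissemination phase: `T_A = ∑_{i=1}^n T_i^A`
    (tA : ℕ → Ω → ℝ) (SA : ℕ → Ω → ℕ) (ηA : ℕ → ℕ → Ω → ℝ)
    (htAmeas : ∀ i, Measurable (tA i))
    (htAd : ∀ i, 1 ≤ i → i ≤ n → Measure.map (tA i) P = sexp (m / k) lam)
    (htAint : ∀ i, Integrable (tA i) P)
    (hSAmeas : ∀ i, Measurable (SA i))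
    (hSAd : ∀ i, 1 ≤ i → i ≤ n → ∀ s : ℕ, 1 ≤ s →
      P {ω | SA i ω = s} =
        ENNReal.ofReal ((1 - ((r : ℝ) - (i : ℝ) + 1) / C) ^ (s - 1)
          * (((r : ℝ) - (i : ℝ) + 1) / C)))
    (hηAmeas : ∀ i j, Measurable (ηA i j))
    (hηAnn : ∀ i j ω, 0 ≤ ηA i j ω)
    (hηAint : ∀ i j, Integrable (ηA i j) P)
    (hηAmean : ∀ i j, ∫ ω, ηA i j ω ∂P = μ)
    (hηAiid : ∀ i, iIndepFun (ηA i) P)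
    (hηAid : ∀ i j, Measure.map (ηA i j) P = Measure.map (ηA i 0) P)
    (hAindep : ∀ i, IndepFun (SA i) (fun ω (j : ℕ) => ηA i j ω) P)
    (hAsumint : ∀ i, Integrable (fun ω => ∑ j ∈ Finset.range (SA i ω), ηA i j ω) P)
    -- collection phase: `T_B = ∑_{i=1}^k T_i^B`
    (tB : ℕ → Ω → ℝ) (SB : ℕ → Ω → ℕ) (ηB : ℕ → ℕ → Ω → ℝ)
    (htBmeas : ∀ i, Measurable (tB i))
    (htBd : ∀ i, 1 ≤ i → i ≤ k → Measure.map (tB i) P = sexp (m / k) lam)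
    (htBint : ∀ i, Integrable (tB i) P)
    (hSBmeas : ∀ i, Measurable (SB i))
    (hSBd : ∀ i, 1 ≤ i → i ≤ k → ∀ s : ℕ, 1 ≤ s →
      P {ω | SB i ω = s} =
        ENNReal.ofReal ((1 - ((n : ℝ) - (i : ℝ) + 1) / C) ^ (s - 1)
          * (((n : ℝ) - (i : ℝ) + 1) / C)))
    (hηBmeas : ∀ i j, Measurable (ηB i j))
    (hηBnn : ∀ i j ω, 0 ≤ ηB i j ω)
    (hηBint : ∀ i j, Integrable (ηB i j) P)
    (hηBmean : ∀ i j, ∫ ω, ηB i j ω ∂P = μ)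
    (hηBiid : ∀ i, iIndepFun (ηB i) P)
    (hηBid : ∀ i j, Measure.map (ηB i j) P = Measure.map (ηB i 0) P)
    (hBindep : ∀ i, IndepFun (SB i) (fun ω (j : ℕ) => ηB i j ω) P)
    (hBsumint : ∀ i, Integrable (fun ω => ∑ j ∈ Finset.range (SB i ω), ηB i j ω) P) :
    ∫ ω, ((∑ i ∈ Finset.Icc 1 n, (tA i ω + ∑ j ∈ Finset.range (SA i ω), ηA i j ω))
          + (∑ i ∈ Finset.Icc 1 k, (tB i ω + ∑ j ∈ Finset.range (SB i ω), ηB i j ω))) ∂P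
      = ((n : ℝ) + (k : ℝ)) / lam + ((n : ℝ) / (k : ℝ) + 1) * m
          + C * μ * (H r + H n - H (r - n) - H (n - k)) := by
  have hkR : (0:ℝ) < (k:ℝ) := by exact_mod_cast hk
  have hCle : (r:ℝ) ≤ C := (div_le_one hC).mp hrC
  have hAt : ∀ i ∈ Finset.Icc 1 n, ∫ ω, tA i ω ∂P = m / (k:ℝ) + 1 / lam := by
    intro i hi
    obtain ⟨h1, h2⟩ := Finset.mem_Icc.mp hi
    have h : ∫ ω, tA i ω ∂P = ∫ x, x ∂(sexp (m / (k:ℝ)) lam) := by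
      rw [← htAd i h1 h2]
      exact (integral_map (htAmeas i).aemeasurable aestronglyMeasurable_id).symm
    rw [h, sexp_mean_aux _ _ (div_nonneg hm.le (Nat.cast_nonneg k)) hlam]
  have hBt : ∀ i ∈ Finset.Icc 1 k, ∫ ω, tB i ω ∂P = m / (k:ℝ) + 1 / lam := by
    intro i hi
    obtain ⟨h1, h2⟩ := Finset.mem_Icc.mp hi
    have h : ∫ ω, tB i ω ∂P = ∫ x, x ∂(sexp (m / (k:ℝ)) lam) := by
      rw [← htBd i h1 h2]
      exact (integral_map (htBmeas i).aemeasurable aestronglyMeasurable_id).symm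
    rw [h, sexp_mean_aux _ _ (div_nonneg hm.le (Nat.cast_nonneg k)) hlam]
  have hAw : ∀ i ∈ Finset.Icc 1 n, ∫ ω, ∑ j ∈ Finset.range (SA i ω), ηA i j ω ∂P
      = C * μ * ((1:ℝ) / ((r:ℝ) - (i:ℝ) + 1)) := by
    intro i hi
    obtain ⟨h1, h2⟩ := Finset.mem_Icc.mp hi
    have hiR : (1:ℝ) ≤ (i:ℝ) := by exact_mod_cast h1
    have hirR : (i:ℝ) ≤ (r:ℝ) := by exact_mod_cast le_trans h2 hnr
    have hnum : (0:ℝ) < (r:ℝ) - (i:ℝ) + 1 := by linarith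
    have hp0 : 0 < ((r:ℝ) - (i:ℝ) + 1) / C := div_pos hnum hC
    have hp1 : ((r:ℝ) - (i:ℝ) + 1) / C ≤ 1 := (div_le_one hC).mpr (by linarith)
    have hw := wald_aux P (SA i) (ηA i) μ _ hμ hp0 hp1 (hSAmeas i) (hηAmeas i) (hηAnn i)
      (hηAint i) (hηAmean i) (hAindep i) (hAsumint i) (hSAd i h1 h2)
    rw [hw, div_div_eq_mul_div]
    field_simp
  have hBw : ∀ i ∈ Finset.Icc 1 k, ∫ ω, ∑ j ∈ Finset.range (SB i ω), ηB i j ω ∂P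
      = C * μ * ((1:ℝ) / ((n:ℝ) - (i:ℝ) + 1)) := by
    intro i hi
    obtain ⟨h1, h2⟩ := Finset.mem_Icc.mp hi
    have hiR : (1:ℝ) ≤ (i:ℝ) := by exact_mod_cast h1
    have hirR : (i:ℝ) ≤ (n:ℝ) := by exact_mod_cast le_trans h2 hkn
    have hnR : (n:ℝ) ≤ (r:ℝ) := by exact_mod_cast hnr
    have hnum : (0:ℝ) < (n:ℝ) - (i:ℝ) + 1 := by linarith
    have hp0 : 0 < ((n:ℝ) - (i:ℝ) + 1) / C := div_pos hnum hC
    have hp1 : ((n:ℝ) - (i:ℝ) + 1) / C ≤ 1 := (div_le_one hC).mpr (by linarith)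
    have hw := wald_aux P (SB i) (ηB i) μ _ hμ hp0 hp1 (hSBmeas i) (hηBmeas i) (hηBnn i)
      (hηBint i) (hηBmean i) (hBindep i) (hBsumint i) (hSBd i h1 h2)
    rw [hw, div_div_eq_mul_div]
    field_simp
  have hintA : ∀ i, Integrable (fun ω => tA i ω + ∑ j ∈ Finset.range (SA i ω), ηA i j ω) P :=
    fun i => (htAint i).add (hAsumint i)
  have hintB : ∀ i, Integrable (fun ω => tB i ω + ∑ j ∈ Finset.range (SB i ω), ηB i j ω) P :=
    fun i => (htBint i).add (hBsumint i)
  have hIA : ∀ i ∈ Finset.Icc 1 n,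
      ∫ ω, (tA i ω + ∑ j ∈ Finset.range (SA i ω), ηA i j ω) ∂P
        = (m / (k:ℝ) + 1 / lam) + C * μ * ((1:ℝ) / ((r:ℝ) - (i:ℝ) + 1)) := by
    intro i hi
    rw [integral_add (htAint i) (hAsumint i), hAt i hi, hAw i hi]
  have hIB : ∀ i ∈ Finset.Icc 1 k,
      ∫ ω, (tB i ω + ∑ j ∈ Finset.range (SB i ω), ηB i j ω) ∂P
        = (m / (k:ℝ) + 1 / lam) + C * μ * ((1:ℝ) / ((n:ℝ) - (i:ℝ) + 1)) := by
    intro i hi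
    rw [integral_add (htBint i) (hBsumint i), hBt i hi, hBw i hi]
  rw [integral_add (integrable_finset_sum _ fun i _ => hintA i)
      (integrable_finset_sum _ fun i _ => hintB i),
    integral_finset_sum _ (fun i _ => hintA i),
    integral_finset_sum _ (fun i _ => hintB i),
    Finset.sum_congr rfl hIA, Finset.sum_congr rfl hIB]
  have e1 : ∑ i ∈ Finset.Icc 1 n, ((m / (k:ℝ) + 1 / lam) + C * μ * ((1:ℝ) / ((r:ℝ) - (i:ℝ) + 1)))
      = n * (m / (k:ℝ) + 1 / lam) + C * μ * (H r - H (r - n)) := by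
    rw [Finset.sum_add_distrib, Finset.sum_const, Nat.card_Icc, ← Finset.mul_sum,
      sum_inv_Icc_aux r n hnr]
    simp [nsmul_eq_mul]
    ring
  have e2 : ∑ i ∈ Finset.Icc 1 k, ((m / (k:ℝ) + 1 / lam) + C * μ * ((1:ℝ) / ((n:ℝ) - (i:ℝ) + 1)))
      = k * (m / (k:ℝ) + 1 / lam) + C * μ * (H n - H (n - k)) := by
    rw [Finset.sum_add_distrib, Finset.sum_const, Nat.card_Icc, ← Finset.mul_sum,
      sum_inv_Icc_aux n k hkn]
    simp [nsmul_eq_mul]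
    ring
  rw [e1, e2]
  have hlam0 : lam ≠ 0 := ne_of_gt hlam
  have hk0 : (k:ℝ) ≠ 0 := ne_of_gt hkR
  field_simp
  ring
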